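/- Let p and p* be real numbers. The polynomials q_n satisfy the three-term recurrence q_{n+1}(s) = (p* − p − 2s)·q_n(s) + n(n − p* − p − 1)·q_{n−1}(s) for all n ≥ 1 and all s ∈ ℂ, with q_0(s) = 1 and q_1(s) = p* − p − 2s. -/

import Mathlib

open Complex Metric

noncomputable def Fab (a b : ℂ) : ℂ → ℂ := fun z => (1 - z) ^ a * (1 + z) ^ b

lemma mem_slit {z : ℂ} (hz : z ∈ ball (0:ℂ) 1) :
    (1 - z) ∈ slitPlane ∧ (1 + z) ∈ slitPlane := by
  rw [Metric.mem_ball, dist_zero_right] at hz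
  have h1 : |z.re| ≤ ‖z‖ := Complex.abs_re_le_norm z
  have h2 := abs_lt.mp (h1.trans_lt hz)
  constructor <;> rw [Complex.mem_slitPlane_iff] <;> left <;> simp <;> linarith [h2.1, h2.2]

lemma analyticFab (a b : ℂ) : AnalyticOnNhd ℂ (Fab a b) (ball (0:ℂ) 1) := by
  intro z hz
  obtain ⟨h1, h2⟩ := mem_slit hz
  exact ((analyticAt_const.sub (analyticAt_id)).cpow analyticAt_const h1).mul
    ((analyticAt_const.add (analyticAt_id)).cpow analyticAt_const h2)

lemma analyticG (a b : ℂ) (n : ℕ) :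
    AnalyticOnNhd ℂ (iteratedDeriv n (Fab a b)) (ball (0:ℂ) 1) := by
  induction n with
  | zero => simpa [iteratedDeriv_zero] using analyticFab a b
  | succ n ih => rw [iteratedDeriv_succ]; exact ih.deriv

lemma hasDerivG (a b : ℂ) (n : ℕ) {z : ℂ} (hz : z ∈ ball (0:ℂ) 1) :
    HasDerivAt (iteratedDeriv n (Fab a b)) (iteratedDeriv (n+1) (Fab a b) z) z := by
  rw [iteratedDeriv_succ]
  exact ((analyticG a b n z hz).differentiableAt).hasDerivAt

lemma base_ode (a b : ℂ) {z : ℂ} (hz : z ∈ ball (0:ℂ) 1) :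
    (1 - z^2) * iteratedDeriv 1 (Fab a b) z
      = ((b - a) - (a + b) * z) * Fab a b z := by
  obtain ⟨h1, h2⟩ := mem_slit hz
  have hne1 : (1 : ℂ) - z ≠ 0 := slitPlane_ne_zero h1
  have hne2 : (1 : ℂ) + z ≠ 0 := slitPlane_ne_zero h2
  have d1 : HasDerivAt (fun w : ℂ => (1 - w) ^ a) (a * (1 - z) ^ (a - 1) * (-1)) z :=
    (((hasDerivAt_id z).const_sub 1)).cpow_const h1
  have d2 : HasDerivAt (fun w : ℂ => (1 + w) ^ b) (b * (1 + z) ^ (b - 1) * 1) z :=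
    (((hasDerivAt_id z).const_add 1)).cpow_const h2
  have dF : HasDerivAt (Fab a b)
      ((a * (1 - z) ^ (a - 1) * (-1)) * (1 + z) ^ b
        + (1 - z) ^ a * (b * (1 + z) ^ (b - 1) * 1)) z := d1.mul d2
  rw [iteratedDeriv_one, dF.deriv]
  have e1 : (1 - z) ^ (a - 1) = (1 - z) ^ a / (1 - z) := by
    rw [Complex.cpow_sub _ _ hne1, Complex.cpow_one]
  have e2 : (1 + z) ^ (b - 1) = (1 + z) ^ b / (1 + z) := by
    rw [Complex.cpow_sub _ _ hne2, Complex.cpow_one]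
  rw [e1, e2, Fab]
  field_simp
  ring

lemma key_ode (a b : ℂ) (n : ℕ) {z : ℂ} (hz : z ∈ ball (0:ℂ) 1) :
    (1 - z^2) * iteratedDeriv (n+1) (Fab a b) z
      = ((b - a) + (2*(n:ℂ) - (a+b)) * z) * iteratedDeriv n (Fab a b) z
        + ((n:ℂ) * ((n:ℂ) - (a+b) - 1)) * iteratedDeriv (n-1) (Fab a b) z := by
  induction n generalizing z with
  | zero =>
    have hb := base_ode a b hz
    simp only [iteratedDeriv_zero] at *
    push_cast
    linear_combination hb
  | succ n ih =>
    have hL : HasDerivAt (fun w => (1 - w^2) * iteratedDeriv (n+1) (Fab a b) w)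
        ((-(2*z)) * iteratedDeriv (n+1) (Fab a b) z
          + (1 - z^2) * iteratedDeriv (n+2) (Fab a b) z) z := by
      have h0 : HasDerivAt (fun w : ℂ => 1 - w^2) (-(2*z)) z := by
        have := (hasDerivAt_pow 2 z).const_sub 1
        refine this.congr_deriv ?_
        push_cast; ring
      exact h0.mul (hasDerivG a b (n+1) hz)
    have hR : HasDerivAt (fun w => ((b - a) + (2*(n:ℂ) - (a+b)) * w) * iteratedDeriv n (Fab a b) w
          + ((n:ℂ) * ((n:ℂ) - (a+b) - 1)) * iteratedDeriv (n-1) (Fab a b) w)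
        ((2*(n:ℂ) - (a+b)) * iteratedDeriv n (Fab a b) z
          + ((b - a) + (2*(n:ℂ) - (a+b)) * z) * iteratedDeriv (n+1) (Fab a b) z
          + ((n:ℂ) * ((n:ℂ) - (a+b) - 1)) * iteratedDeriv (n-1+1) (Fab a b) z) z := by
      have h1 : HasDerivAt (fun w : ℂ => (b - a) + (2*(n:ℂ) - (a+b)) * w)
          (2*(n:ℂ) - (a+b)) z := by
        have := ((hasDerivAt_id z).const_mul (2*(n:ℂ) - (a+b))).const_add (b - a)
        refine this.congr_deriv ?_
        ring
      exact (h1.mul (hasDerivG a b n hz)).add ((hasDerivG a b (n-1) hz).const_mul _)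
    have heq : (fun w => ((b - a) + (2*(n:ℂ) - (a+b)) * w) * iteratedDeriv n (Fab a b) w
          + ((n:ℂ) * ((n:ℂ) - (a+b) - 1)) * iteratedDeriv (n-1) (Fab a b) w)
        =ᶠ[nhds z] (fun w => (1 - w^2) * iteratedDeriv (n+1) (Fab a b) w) := by
      filter_upwards [isOpen_ball.mem_nhds hz] with w hw
      exact (ih hw).symm
    have hL' : HasDerivAt (fun w => ((b - a) + (2*(n:ℂ) - (a+b)) * w) * iteratedDeriv n (Fab a b) w
          + ((n:ℂ) * ((n:ℂ) - (a+b) - 1)) * iteratedDeriv (n-1) (Fab a b) w)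
        ((-(2*z)) * iteratedDeriv (n+1) (Fab a b) z
          + (1 - z^2) * iteratedDeriv (n+2) (Fab a b) z) z := hL.congr_of_eventuallyEq heq
    have huniq := hR.unique hL'
    rcases n with _ | m
    · simp only [Nat.add_sub_cancel, Nat.zero_sub, Nat.cast_zero, Nat.cast_one] at huniq ⊢
      push_cast at huniq ⊢
      linear_combination -huniq
    · simp only [Nat.add_sub_cancel] at huniq ⊢
      push_cast at huniq ⊢
      linear_combination -huniq

/-- `qpoly p ps n s` is `n!` times the `n`-th Taylor coefficient at `z = 0` of
`z ↦ (1 - z)^(p+s) * (1 + z)^(ps - s)` (principal branch powers). -/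
noncomputable def qpoly (p ps : ℝ) (n : ℕ) (s : ℂ) : ℂ :=
  iteratedDeriv n (fun z : ℂ => (1 - z) ^ ((p : ℂ) + s) * (1 + z) ^ ((ps : ℂ) - s)) 0

theorem qpoly_three_term_recurrence (p ps : ℝ) :
    (∀ n : ℕ, 1 ≤ n → ∀ s : ℂ,
      qpoly p ps (n + 1) s =
        ((ps : ℂ) - (p : ℂ) - 2 * s) * qpoly p ps n s
          + (n : ℂ) * ((n : ℂ) - (ps : ℂ) - (p : ℂ) - 1) * qpoly p ps (n - 1) s) ∧
    (∀ s : ℂ, qpoly p ps 0 s = 1) ∧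
    (∀ s : ℂ, qpoly p ps 1 s = (ps : ℂ) - (p : ℂ) - 2 * s) := by
  have h00 : (0:ℂ) ∈ ball (0:ℂ) 1 := Metric.mem_ball_self one_pos
  have hq : ∀ (n : ℕ) (s : ℂ),
      qpoly p ps n s = iteratedDeriv n (Fab ((p:ℂ)+s) ((ps:ℂ)-s)) 0 := fun n s => rfl
  have hq0 : ∀ s : ℂ, qpoly p ps 0 s = 1 := by
    intro s
    rw [hq, iteratedDeriv_zero, Fab]
    simp
  refine ⟨?_, hq0, ?_⟩
  · intro n hn s
    obtain ⟨m, rfl⟩ := Nat.exists_eq_add_of_le hn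
    set a := (p:ℂ) + s
    set b := (ps:ℂ) - s
    have hk := key_ode a b (m+1) h00
    simp only [Nat.add_sub_cancel] at hk
    rw [show (1:ℕ) + m = m + 1 from by ring, hq, hq, hq]
    simp only [Nat.add_sub_cancel]
    push_cast at hk ⊢
    linear_combination hk
  · intro s
    have hk := key_ode ((p:ℂ)+s) ((ps:ℂ)-s) 0 h00
    simp only [Nat.cast_zero, Nat.zero_sub, iteratedDeriv_zero] at hk
    have hF0 : Fab ((p:ℂ)+s) ((ps:ℂ)-s) 0 = 1 := by rw [Fab]; simp
    rw [hq]
    rw [hF0] at hk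
    push_cast at hk
    linear_combination hk
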